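/- Let N ∈ ℕ and let y₁,…,y_N be distinct points in ℝ³. If Θ is a symmetric N×N complex matrix such that ∑_{j,k=1}^N Θ_{jk} / (|x − y_j| · |y − y_k|) = 0 for all x, y ∈ ℝ³ \ {y₁,…,y_N}, then Θ = 0. -/

import Mathlib

lemma key_lemma {N : ℕ} {y : Fin N → EuclideanSpace ℝ (Fin 3)} (hy : Function.Injective y)
    (c : Fin N → ℂ) (h : ∀ x : EuclideanSpace ℝ (Fin 3), (∀ j, x ≠ y j) →
      ∑ j, c j / ((‖x - y j‖ : ℝ) : ℂ) = 0) (j0 : Fin N) : c j0 = 0 := by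
  obtain ⟨δ, hδpos, hδ⟩ : ∃ δ > 0, ∀ k, k ≠ j0 → δ ≤ ‖y j0 - y k‖ := by
    rcases Finset.eq_empty_or_nonempty (Finset.univ.erase j0) with he | hne
    · refine ⟨1, one_pos, fun k hk => absurd (Finset.mem_erase.mpr ⟨hk, Finset.mem_univ k⟩)
        (by simp [he])⟩
    · refine ⟨(Finset.univ.erase j0).inf' hne (fun k => ‖y j0 - y k‖), ?_, ?_⟩
      · rw [gt_iff_lt, Finset.lt_inf'_iff]
        intro k hk
        have hk' : k ≠ j0 := (Finset.mem_erase.mp hk).1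
        have : y j0 ≠ y k := fun hc => hk' (hy hc.symm)
        simpa [sub_ne_zero] using this
      · intro k hk
        exact Finset.inf'_le _ (Finset.mem_erase.mpr ⟨hk, Finset.mem_univ k⟩)
  set S : ℝ := ∑ j, ‖c j‖ with hS
  have hSnn : 0 ≤ S := Finset.sum_nonneg fun j _ => norm_nonneg _
  set C : ℝ := 2 / δ * S with hC
  have hCnn : 0 ≤ C := by positivity
  have key2 : ∀ ε : ℝ, 0 < ε → ε ≤ δ / 2 → ‖c j0‖ ≤ ε * C := by
    intro ε hε hεδ
    set v : EuclideanSpace ℝ (Fin 3) := EuclideanSpace.single 0 1 with hv_def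
    have hv : ‖v‖ = 1 := by simp [hv_def]
    set x : EuclideanSpace ℝ (Fin 3) := y j0 + ε • v with hx_def
    have hx0 : ‖x - y j0‖ = ε := by
      rw [hx_def, add_sub_cancel_left, norm_smul, hv]
      simp [abs_of_pos hε]
    have hxk : ∀ k, k ≠ j0 → δ / 2 ≤ ‖x - y k‖ := by
      intro k hk
      have h1 := hδ k hk
      have h2 : ‖y j0 - y k‖ ≤ ‖y j0 - x‖ + ‖x - y k‖ := by
        have := dist_triangle (y j0) x (y k)
        simpa [dist_eq_norm] using this
      have h3 : ‖y j0 - x‖ = ε := by rw [norm_sub_rev, hx0]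
      linarith
    have hne : ∀ k, x ≠ y k := by
      intro k hxy
      have h0 : ‖x - y k‖ = 0 := by rw [hxy, sub_self, norm_zero]
      rcases eq_or_ne k j0 with rfl | hk
      · rw [hx0] at h0; linarith
      · have := hxk k hk; linarith
    have hs := h x hne
    rw [← Finset.add_sum_erase Finset.univ _ (Finset.mem_univ j0), hx0] at hs
    have hε0 : ((ε : ℝ) : ℂ) ≠ 0 := by exact_mod_cast hε.ne'
    have hcj : c j0 = (-(∑ j ∈ Finset.univ.erase j0, c j / ((‖x - y j‖ : ℝ) : ℂ))) * (ε : ℂ) :=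
      (div_eq_iff hε0).mp (eq_neg_of_add_eq_zero_left hs)
    have habs : ‖c j0‖ =
        ε * ‖∑ j ∈ Finset.univ.erase j0, c j / ((‖x - y j‖ : ℝ) : ℂ)‖ := by
      rw [hcj, norm_mul, norm_neg, Complex.norm_real, Real.norm_eq_abs, abs_of_pos hε, mul_comm]
    rw [habs]
    gcongr
    calc ‖∑ j ∈ Finset.univ.erase j0, c j / ((‖x - y j‖ : ℝ) : ℂ)‖
        ≤ ∑ j ∈ Finset.univ.erase j0, ‖c j / ((‖x - y j‖ : ℝ) : ℂ)‖ := by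
          exact norm_sum_le _ _
      _ ≤ ∑ j ∈ Finset.univ.erase j0, ‖c j‖ * (2 / δ) := by
          refine Finset.sum_le_sum fun j hj => ?_
          have hj' : j ≠ j0 := (Finset.mem_erase.mp hj).1
          have hb := hxk j hj'
          rw [norm_div, Complex.norm_real, Real.norm_eq_abs, abs_of_nonneg (norm_nonneg _)]
          have h1 : ‖c j‖ / ‖x - y j‖ ≤ ‖c j‖ / (δ / 2) := by
            apply div_le_div_of_nonneg_left (norm_nonneg _) (by linarith) hb
          have h2 : ‖c j‖ / (δ / 2) = ‖c j‖ * (2 / δ) := by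
            field_simp
          linarith
      _ ≤ ∑ j, ‖c j‖ * (2 / δ) := by
          refine Finset.sum_le_sum_of_subset_of_nonneg (Finset.erase_subset _ _) ?_
          intro j _ _; positivity
      _ = C := by rw [hC, ← Finset.sum_mul]; ring
  have hfinal : ∀ t : ℝ, 0 < t → ‖c j0‖ ≤ 0 + t := by
    intro t ht
    have hε : 0 < min (δ / 2) (t / (C + 1)) := by positivity
    have h1 := key2 _ hε (min_le_left _ _)
    have h2 : min (δ / 2) (t / (C + 1)) * C ≤ t / (C + 1) * C :=
      mul_le_mul_of_nonneg_right (min_le_right _ _) hCnn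
    have h3 : t / (C + 1) * C ≤ t := by
      rw [div_mul_eq_mul_div, div_le_iff₀ (by linarith)]
      nlinarith
    linarith
  have : ‖c j0‖ ≤ 0 := le_of_forall_pos_le_add hfinal
  have := le_antisymm this (norm_nonneg _)
  exact norm_eq_zero.mp this

theorem stmt_1 (N : ℕ) (y : Fin N → EuclideanSpace ℝ (Fin 3)) (hy : Function.Injective y)
    (Θ : Matrix (Fin N) (Fin N) ℂ) (hsym : Θ.IsSymm)
    (h : ∀ x z : EuclideanSpace ℝ (Fin 3), (∀ j, x ≠ y j) → (∀ k, z ≠ y k) →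
      ∑ j, ∑ k, Θ j k / (((‖x - y j‖ : ℝ) : ℂ) * ((‖z - y k‖ : ℝ) : ℂ)) = 0) :
    Θ = 0 := by
  have step1 : ∀ z : EuclideanSpace ℝ (Fin 3), (∀ k, z ≠ y k) → ∀ j,
      ∑ k, Θ j k / ((‖z - y k‖ : ℝ) : ℂ) = 0 := by
    intro z hz j
    apply key_lemma hy (fun j => ∑ k, Θ j k / ((‖z - y k‖ : ℝ) : ℂ))
    intro x hx
    have := h x z hx hz
    rw [← this]
    refine Finset.sum_congr rfl fun j' _ => ?_
    rw [Finset.sum_div]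
    refine Finset.sum_congr rfl fun k _ => ?_
    rw [div_div]
    ring_nf
  ext j k
  have : Θ j k = 0 := by
    apply key_lemma hy (fun k => Θ j k)
    intro z hz
    exact step1 z hz j
  simpa using this
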